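/- arXiv:1712.00686 — 2 statements merged into one kernel-verified Lean document; each statement's English description precedes it below -/
import Mathlib

section
/- Let D=(V,E) be a finite multidigraph and let e be a loop of D. Then σ̂(D;x,y) = σ̂(D_{-e};x,y) + x·y·σ̂(D_{/e};x,y). -/
open Classical

/-- A finite multidigraph: a finite set `V` of vertices (natural numbers),
a finite set `A` of arc identifiers, and a map `ends` assigning to each arc
identifier its (source, target) pair of vertices.  Parallel arcs are distinct
identifiers with the same endpoints; loops are arcs with equal endpoints. -/
structure MDigraph where
  V : Finset ℕ
  A : Finset ℕ
  ends : ℕ → ℕ × ℕ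

namespace MDigraph

/-- Every arc has both endpoints in the vertex set. -/
def WellFormed (D : MDigraph) : Prop :=
  ∀ a ∈ D.A, (D.ends a).1 ∈ D.V ∧ (D.ends a).2 ∈ D.V

/-- An arc is a loop if its source equals its target. -/
def IsLoop (D : MDigraph) (e : ℕ) : Prop := (D.ends e).1 = (D.ends e).2

/-- Arc deletion `D_{-e}`. -/
def delArc (D : MDigraph) (e : ℕ) : MDigraph := ⟨D.V, D.A.erase e, D.ends⟩

/-- Arc contraction `D_{/e}`.  For a non-loop arc `e = (u,v)`: merge `u` and `v`
into a single vertex (named `u`), removing exactly the arcs of the form `(u,x)`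
and `(y,v)`.  For a loop `e = (u,u)`: delete `u` together with all incident arcs. -/
noncomputable def contractArc (D : MDigraph) (e : ℕ) : MDigraph :=
  let u := (D.ends e).1
  let v := (D.ends e).2
  if u = v then
    ⟨D.V.erase u, D.A.filter (fun a => (D.ends a).1 ≠ u ∧ (D.ends a).2 ≠ u), D.ends⟩
  else
    ⟨D.V.erase v, D.A.filter (fun a => (D.ends a).1 ≠ u ∧ (D.ends a).2 ≠ v),
      fun a => ((if (D.ends a).1 = v then u else (D.ends a).1),
                (if (D.ends a).2 = v then u else (D.ends a).2))⟩

/-- Arc extraction `D_{†e}`: delete both endpoints of `e` and all arcs incident to them. -/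
noncomputable def extractArc (D : MDigraph) (e : ℕ) : MDigraph :=
  let u := (D.ends e).1
  let v := (D.ends e).2
  ⟨(D.V.erase u).erase v,
   D.A.filter (fun a =>
     (D.ends a).1 ≠ u ∧ (D.ends a).1 ≠ v ∧ (D.ends a).2 ≠ u ∧ (D.ends a).2 ≠ v),
   D.ends⟩

/-- Add one new arc with endpoints `p` (using a fresh arc identifier). -/
noncomputable def addArc (D : MDigraph) (p : ℕ × ℕ) : MDigraph :=
  ⟨D.V, insert (D.A.sup id + 1) D.A, Function.update D.ends (D.A.sup id + 1) p⟩

/-- Vertex deletion `D_{-v}`. -/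
noncomputable def delVertex (D : MDigraph) (v : ℕ) : MDigraph :=
  ⟨D.V.erase v, D.A.filter (fun a => (D.ends a).1 ≠ v ∧ (D.ends a).2 ≠ v), D.ends⟩

/-- Vertex contraction `D_{/v}`: delete `v`, and for every arc `(u,v)` into `v`
and every arc `(v,w)` out of `v` add a new arc `(u,w)`; thus the multiplicity of
a new arc `(u,w)` is the multiplicity of `(u,v)` times that of `(v,w)`. -/
noncomputable def contractVertex (D : MDigraph) (v : ℕ) : MDigraph :=
  ⟨D.V.erase v,
   ((D.A.filter (fun a => (D.ends a).1 ≠ v ∧ (D.ends a).2 ≠ v)).image (fun a => 2 * a)) ∪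
     (((D.A.filter (fun a => (D.ends a).2 = v)) ×ˢ (D.A.filter (fun a => (D.ends a).1 = v))).image
       (fun p => 2 * Nat.pair p.1 p.2 + 1)),
   fun n =>
     if n % 2 = 0 then D.ends (n / 2)
     else ((D.ends (Nat.unpair ((n - 1) / 2)).1).1, (D.ends (Nat.unpair ((n - 1) / 2)).2).2)⟩

/-- The arc-less digraph on `n` vertices. -/
def emptyD (n : ℕ) : MDigraph := ⟨Finset.range n, ∅, fun _ => (0, 0)⟩

/-- Disjoint union of two multidigraphs (vertices and arcs relabelled evenly/oddly). -/
noncomputable def disjUnion (D₁ D₂ : MDigraph) : MDigraph :=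
  ⟨(D₁.V.image (fun v => 2 * v)) ∪ (D₂.V.image (fun v => 2 * v + 1)),
   (D₁.A.image (fun a => 2 * a)) ∪ (D₂.A.image (fun a => 2 * a + 1)),
   fun n =>
     if n % 2 = 0 then (2 * (D₁.ends (n / 2)).1, 2 * (D₁.ends (n / 2)).2)
     else (2 * (D₂.ends (n / 2)).1 + 1, 2 * (D₂.ends (n / 2)).2 + 1)⟩

/-- Isomorphism of multidigraphs. -/
def Iso (D₁ D₂ : MDigraph) : Prop :=
  ∃ φ ψ : ℕ → ℕ, Set.BijOn φ ↑D₁.V ↑D₂.V ∧ Set.BijOn ψ ↑D₁.A ↑D₂.A ∧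
    ∀ a ∈ D₁.A, D₂.ends (ψ a) = (φ (D₁.ends a).1, φ (D₁.ends a).2)

/-- `C` is (the arc set of) a directed cycle of length `k` in `D`: `k` distinct arcs
forming a closed directed walk through `k` distinct vertices (`k ≥ 1`;
a loop is a directed cycle of length 1). -/
def IsCycle (D : MDigraph) (C : Finset ℕ) (k : ℕ) : Prop :=
  1 ≤ k ∧ ∃ v a : ℕ → ℕ,
    (∀ i j, i < k → j < k → v i = v j → i = j) ∧
    (∀ i j, i < k → j < k → a i = a j → i = j) ∧
    (∀ i, i < k → a i ∈ D.A ∧ D.ends (a i) = (v i, v ((i + 1) % k))) ∧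
    C = (Finset.range k).image a

/-- `P` is (the arc set of) a directed path of length `k` in `D`: `k` distinct arcs
forming a directed walk through `k+1` distinct vertices (`k ≥ 1`). -/
def IsPath (D : MDigraph) (P : Finset ℕ) (k : ℕ) : Prop :=
  1 ≤ k ∧ ∃ v a : ℕ → ℕ,
    (∀ i j, i ≤ k → j ≤ k → v i = v j → i = j) ∧
    (∀ i j, i < k → j < k → a i = a j → i = j) ∧
    (∀ i, i < k → a i ∈ D.A ∧ D.ends (a i) = (v i, v (i + 1))) ∧
    P = (Finset.range k).image a

/-- Number `c_k(D)` of directed cycles of length `k`. -/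
noncomputable def cycCount (D : MDigraph) (k : ℕ) : ℕ :=
  (D.A.powerset.filter (fun C => IsCycle D C k)).card

/-- Number `p_k(D)` of directed paths of length `k`. -/
noncomputable def pathCount (D : MDigraph) (k : ℕ) : ℕ :=
  (D.A.powerset.filter (fun P => IsPath D P k)).card

/-- The cycle polynomial `σ(D;x) = ∑_k c_k(D) x^k`. -/
noncomputable def cyclePoly (D : MDigraph) : Polynomial ℝ :=
  ∑ k ∈ Finset.range (D.A.card + 1), (cycCount D k : ℝ) • Polynomial.X ^ k

/-- The path polynomial `π(D;x) = ∑_k p_k(D) x^k`. -/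
noncomputable def pathPoly (D : MDigraph) : Polynomial ℝ :=
  ∑ k ∈ Finset.range (D.A.card + 1), (pathCount D k : ℝ) • Polynomial.X ^ k


/-- Out-degree of `v`: arcs with tail `v`, counted with multiplicity. -/
noncomputable def outDeg (D : MDigraph) (v : ℕ) : ℕ :=
  (D.A.filter (fun a => (D.ends a).1 = v)).card

/-- In-degree of `v`: arcs with head `v`, counted with multiplicity. -/
noncomputable def inDeg (D : MDigraph) (v : ℕ) : ℕ :=
  (D.A.filter (fun a => (D.ends a).2 = v)).card

/-- `P` is a directed path of length `k` in `D` beginning at `v0`. -/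
def IsPathFrom (D : MDigraph) (v0 : ℕ) (P : Finset ℕ) (k : ℕ) : Prop :=
  1 ≤ k ∧ ∃ v a : ℕ → ℕ, v 0 = v0 ∧
    (∀ i j, i ≤ k → j ≤ k → v i = v j → i = j) ∧
    (∀ i j, i < k → j < k → a i = a j → i = j) ∧
    (∀ i, i < k → a i ∈ D.A ∧ D.ends (a i) = (v i, v (i + 1))) ∧
    P = (Finset.range k).image a

/-- `P` is a directed path of length `k` in `D` ending at `v0`. -/
def IsPathTo (D : MDigraph) (v0 : ℕ) (P : Finset ℕ) (k : ℕ) : Prop :=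
  1 ≤ k ∧ ∃ v a : ℕ → ℕ, v k = v0 ∧
    (∀ i j, i ≤ k → j ≤ k → v i = v j → i = j) ∧
    (∀ i j, i < k → j < k → a i = a j → i = j) ∧
    (∀ i, i < k → a i ∈ D.A ∧ D.ends (a i) = (v i, v (i + 1))) ∧
    P = (Finset.range k).image a

/-- `p_k(D,v,+)`: number of directed paths of length `k` beginning at `v`. -/
noncomputable def pathFromCount (D : MDigraph) (v : ℕ) (k : ℕ) : ℕ :=
  (D.A.powerset.filter (fun P => IsPathFrom D v P k)).card

/-- `p_k(D,v,−)`: number of directed paths of length `k` ending at `v`. -/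
noncomputable def pathToCount (D : MDigraph) (v : ℕ) (k : ℕ) : ℕ :=
  (D.A.powerset.filter (fun P => IsPathTo D v P k)).card

/-- `π_{v+}(D;x) = ∑_k p_k(D,v,+) x^k`. -/
noncomputable def pathFromPoly (D : MDigraph) (v : ℕ) : Polynomial ℝ :=
  ∑ k ∈ Finset.range (D.A.card + 1), (pathFromCount D v k : ℝ) • Polynomial.X ^ k

/-- `π_{v-}(D;x) = ∑_k p_k(D,v,−) x^k`. -/
noncomputable def pathToPoly (D : MDigraph) (v : ℕ) : Polynomial ℝ :=
  ∑ k ∈ Finset.range (D.A.card + 1), (pathToCount D v k : ℝ) • Polynomial.X ^ k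

/-- In the spanning subgraph `D⟨F⟩`, every vertex has out-degree ≤ 1 and
in-degree ≤ 1; equivalently, every component of `D⟨F⟩` is a directed cycle,
a directed path, or an isolated vertex. -/
def DegOK (D : MDigraph) (F : Finset ℕ) : Prop :=
  ∀ w : ℕ, (F.filter (fun a => (D.ends a).1 = w)).card ≤ 1 ∧
    (F.filter (fun a => (D.ends a).2 = w)).card ≤ 1

/-- `kc(D⟨F⟩)`: the number of components of the spanning subgraph `D⟨F⟩` that are
directed cycles (for degree-constrained `F`, these are exactly the directed
cycles contained in `F`). -/
noncomputable def kcF (D : MDigraph) (F : Finset ℕ) : ℕ :=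
  (F.powerset.filter (fun C => ∃ k, IsCycle D C k)).card

/-- `kp(D⟨F⟩)`: the number of components of the spanning subgraph `D⟨F⟩` that are
directed paths with at least one arc (for degree-constrained `F`, counted by
their initial vertices: vertices that are the tail of an arc of `F` but the
head of no arc of `F`). -/
noncomputable def kpF (D : MDigraph) (F : Finset ℕ) : ℕ :=
  ((F.image (fun a => (D.ends a).1)).filter
    (fun w => (F.filter (fun a => (D.ends a).2 = w)).card = 0)).card

/-- The number of vertices covered by (incident to) the arcs of `F`. -/
noncomputable def coveredCard (D : MDigraph) (F : Finset ℕ) : ℕ :=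
  ((F.image (fun a => (D.ends a).1)) ∪ (F.image (fun a => (D.ends a).2))).card

/-- `k(D⟨F⟩)`: total number of connected components of the spanning subgraph
`D⟨F⟩` (isolated vertices included), for degree-constrained `F` in a
well-formed digraph. -/
noncomputable def kF (D : MDigraph) (F : Finset ℕ) : ℕ :=
  D.V.card - coveredCard D F + kcF D F + kpF D F

/-- `c(D⟨F⟩)`: number of covered components (components with at least one arc). -/
noncomputable def cF (D : MDigraph) (F : Finset ℕ) : ℕ := kcF D F + kpF D F

/-- `c₁(D⟨F⟩)`: number of loops in `F`. -/
noncomputable def loopCount (D : MDigraph) (F : Finset ℕ) : ℕ :=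
  (F.filter (fun a => (D.ends a).1 = (D.ends a).2)).card

/-- The bivariate cycle polynomial
`σ̂(D;x,y) = ∑_F x^{|F|} y^{kc(D⟨F⟩)}`, the sum being over all arc subsets `F`
such that every component of `D⟨F⟩` is a directed cycle or an isolated vertex. -/
noncomputable def biCycPoly (D : MDigraph) : MvPolynomial (Fin 2) ℝ :=
  ∑ F ∈ D.A.powerset.filter (fun F => DegOK D F ∧ kpF D F = 0),
    MvPolynomial.X 0 ^ F.card * MvPolynomial.X 1 ^ kcF D F

/-- The bivariate path polynomial
`π̂(D;x,y) = ∑_F x^{|F|} y^{kp(D⟨F⟩)}`, the sum being over all arc subsets `F`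
such that every component of `D⟨F⟩` is a directed path or an isolated vertex. -/
noncomputable def biPathPoly (D : MDigraph) : MvPolynomial (Fin 2) ℝ :=
  ∑ F ∈ D.A.powerset.filter (fun F => DegOK D F ∧ kcF D F = 0),
    MvPolynomial.X 0 ^ F.card * MvPolynomial.X 1 ^ kpF D F

/-- The trivariate cycle-path polynomial
`σ̂π(D;x,y,z) = ∑_F x^{|F|} y^{kc(D⟨F⟩)} z^{kp(D⟨F⟩)}`, the sum being over all
arc subsets `F` in which every vertex has in- and out-degree at most 1. -/
noncomputable def triPoly (D : MDigraph) : MvPolynomial (Fin 3) ℝ :=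
  ∑ F ∈ D.A.powerset.filter (fun F => DegOK D F),
    MvPolynomial.X 0 ^ F.card * MvPolynomial.X 1 ^ kcF D F * MvPolynomial.X 2 ^ kpF D F

/-- The geometric cover polynomial `C̃(D;x,y) = ∑_{i,j} c_{i,j}(D) x^i y^j`,
where `c_{i,j}(D)` is the number of ways of disjointly covering all vertices of
`D` with `i` directed paths and `j` directed cycles (isolated vertices counting
as paths of length 0): a cover is an arc subset `F` with all in- and out-degrees
at most 1, contributing `j = kc(D⟨F⟩)` cycles and
`i = kp(D⟨F⟩) + (number of uncovered vertices)` paths. -/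
noncomputable def geomCover (D : MDigraph) (x y : ℝ) : ℝ :=
  ∑ F ∈ D.A.powerset.filter (fun F => DegOK D F),
    x ^ (kpF D F + (D.V.card - coveredCard D F)) * y ^ kcF D F

/-- No vertex is incident both to an arc of `A` and to an arc of `B`. -/
def NoCommonVertex (D : MDigraph) (A B : Finset ℕ) : Prop :=
  ∀ a ∈ A, ∀ b ∈ B,
    (D.ends a).1 ≠ (D.ends b).1 ∧ (D.ends a).1 ≠ (D.ends b).2 ∧
    (D.ends a).2 ≠ (D.ends b).1 ∧ (D.ends a).2 ≠ (D.ends b).2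

/-- The explicit polynomial
`N(D;x,y,z) = ∑_{(A,B)} x^{k(D⟨A∪B⟩)−c(D⟨B⟩)−c₁(D⟨A⟩)} y^{|A|+|B|−c(D⟨B⟩)} z^{c(D⟨B⟩)}`,
summing over pairs of disjoint arc subsets `A, B` sharing no vertex such that
every component of `D⟨A∪B⟩` is a directed cycle, a directed path or an isolated
vertex. -/
noncomputable def NPoly (D : MDigraph) : MvPolynomial (Fin 3) ℝ :=
  ∑ p ∈ (D.A.powerset ×ˢ D.A.powerset).filter
      (fun p => Disjoint p.1 p.2 ∧ NoCommonVertex D p.1 p.2 ∧ DegOK D (p.1 ∪ p.2)),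
    MvPolynomial.X 0 ^ (kF D (p.1 ∪ p.2) - cF D p.2 - loopCount D p.1) *
      MvPolynomial.X 1 ^ (p.1.card + p.2.card - cF D p.2) *
      MvPolynomial.X 2 ^ cF D p.2

end MDigraph

/-- A finite undirected graph: a finite vertex set and a finite set of
unordered pairs as edges. -/
structure SGraph where
  V : Finset ℕ
  E : Finset (Sym2 ℕ)

namespace SGraph

/-- `G` is a simple graph: no loops, and all edge endpoints are vertices. -/
def Simple (G : SGraph) : Prop :=
  (∀ s ∈ G.E, ¬ s.IsDiag) ∧ ∀ s ∈ G.E, ∀ a ∈ s, a ∈ G.V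

/-- `P` is (the edge set of) an undirected path of length `k` in `G`. -/
def IsUPath (G : SGraph) (P : Finset (Sym2 ℕ)) (k : ℕ) : Prop :=
  1 ≤ k ∧ ∃ v : ℕ → ℕ,
    (∀ i j, i ≤ k → j ≤ k → v i = v j → i = j) ∧
    (∀ i, i < k → s(v i, v (i + 1)) ∈ G.E) ∧
    P = (Finset.range k).image (fun i => s(v i, v (i + 1)))

/-- `C` is (the edge set of) an undirected cycle of length `k ≥ 3` in `G`. -/
def IsUCycle (G : SGraph) (C : Finset (Sym2 ℕ)) (k : ℕ) : Prop :=
  3 ≤ k ∧ ∃ v : ℕ → ℕ,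
    (∀ i j, i < k → j < k → v i = v j → i = j) ∧
    (∀ i, i < k → s(v i, v ((i + 1) % k)) ∈ G.E) ∧
    C = (Finset.range k).image (fun i => s(v i, v ((i + 1) % k)))

/-- `p_k(G)`: number of undirected paths of length `k` in `G`. -/
noncomputable def uPathCount (G : SGraph) (k : ℕ) : ℕ :=
  (G.E.powerset.filter (fun P => IsUPath G P k)).card

/-- `c_k(G)`: number of undirected cycles of length `k` in `G`. -/
noncomputable def uCycCount (G : SGraph) (k : ℕ) : ℕ :=
  (G.E.powerset.filter (fun C => IsUCycle G C k)).card

/-- `π(G;x) = ∑_k p_k(G) x^k`. -/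
noncomputable def uPathPoly (G : SGraph) : Polynomial ℝ :=
  ∑ k ∈ Finset.range (G.E.card + 1), (uPathCount G k : ℝ) • Polynomial.X ^ k

/-- `σ(G;x) = ∑_k c_k(G) x^k`. -/
noncomputable def uCycPoly (G : SGraph) : Polynomial ℝ :=
  ∑ k ∈ Finset.range (G.E.card + 1), (uCycCount G k : ℝ) • Polynomial.X ^ k

/-- The digraph `D(G)` obtained from `G` by replacing each edge `{u,v}` by the
two oppositely oriented arcs `(u,v)` and `(v,u)`. -/
noncomputable def toDigraph (G : SGraph) : MDigraph :=
  ⟨G.V, ((G.V ×ˢ G.V).filter (fun p => s(p.1, p.2) ∈ G.E)).image (fun p => Nat.pair p.1 p.2),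
   Nat.unpair⟩

end SGraph


namespace MDigraph

private lemma degOK_mono {D : MDigraph} {F F' : Finset ℕ} (h : F' ⊆ F) (hd : DegOK D F) :
    DegOK D F' := fun w =>
  ⟨le_trans (Finset.card_le_card (Finset.filter_subset_filter _ h)) (hd w).1,
   le_trans (Finset.card_le_card (Finset.filter_subset_filter _ h)) (hd w).2⟩

private lemma cycle_loop_eq {D : MDigraph} {C : Finset ℕ} {k e : ℕ}
    (hC : IsCycle D C k) (heC : e ∈ C) (hl : (D.ends e).1 = (D.ends e).2) :
    C = {e} := by
  obtain ⟨hk, v, a, hv, ha, harc, hCe⟩ := hC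
  subst hCe
  obtain ⟨i, hi, hai⟩ := Finset.mem_image.mp heC
  rw [Finset.mem_range] at hi
  have h1 : D.ends (a i) = (v i, v ((i + 1) % k)) := (harc i hi).2
  rw [← hai] at hl
  rw [h1] at hl
  have hik : i = (i + 1) % k := hv i _ hi (Nat.mod_lt _ (by omega)) hl
  have hk1 : k = 1 ∧ i = 0 := by
    rcases Nat.lt_or_ge (i + 1) k with h | h
    · rw [Nat.mod_eq_of_lt h] at hik; omega
    · have hik' : i + 1 = k := by omega
      rw [hik', Nat.mod_self] at hik
      omega
  obtain ⟨rfl, rfl⟩ := hk1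
  simp [hai]

private lemma singleton_loop_cycle {D : MDigraph} {e : ℕ} (he : e ∈ D.A)
    (hl : (D.ends e).1 = (D.ends e).2) : IsCycle D {e} 1 := by
  refine ⟨le_refl 1, fun _ => (D.ends e).1, fun _ => e, ?_, ?_, ?_, ?_⟩
  · intro i j hi hj _; omega
  · intro i j hi hj _; omega
  · intro i hi
    refine ⟨he, ?_⟩
    rw [Prod.ext_iff]
    exact ⟨rfl, hl.symm⟩
  · simp

private lemma isCycle_of_subset {D₁ D₂ : MDigraph} (hends : D₂.ends = D₁.ends)
    {C : Finset ℕ} (hC : C ⊆ D₂.A) {k : ℕ} (h : IsCycle D₁ C k) : IsCycle D₂ C k := by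
  obtain ⟨hk, v, a, hv, ha, harc, hCe⟩ := h
  refine ⟨hk, v, a, hv, ha, fun i hi => ⟨?_, ?_⟩, hCe⟩
  · apply hC
    rw [hCe]
    exact Finset.mem_image_of_mem _ (Finset.mem_range.mpr hi)
  · rw [hends]
    exact (harc i hi).2

private lemma loop_degOK_avoid {D : MDigraph} {e : ℕ}
    (hl : (D.ends e).1 = (D.ends e).2) {F : Finset ℕ} (heF : e ∈ F) (hd : DegOK D F) :
    ∀ a ∈ F.erase e, (D.ends a).1 ≠ (D.ends e).1 ∧ (D.ends a).2 ≠ (D.ends e).1 := by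
  intro a ha
  obtain ⟨hane, haF⟩ := Finset.mem_erase.mp ha
  constructor
  · intro hcontra
    have h2 : ({a, e} : Finset ℕ) ⊆ F.filter (fun b => (D.ends b).1 = (D.ends e).1) := by
      intro b hb
      simp only [Finset.mem_insert, Finset.mem_singleton] at hb
      rcases hb with rfl | rfl
      · exact Finset.mem_filter.mpr ⟨haF, hcontra⟩
      · exact Finset.mem_filter.mpr ⟨heF, rfl⟩
    have h3 := Finset.card_le_card h2
    rw [Finset.card_pair hane] at h3
    have h4 := (hd (D.ends e).1).1
    omega
  · intro hcontra
    have h2 : ({a, e} : Finset ℕ) ⊆ F.filter (fun b => (D.ends b).2 = (D.ends e).1) := by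
      intro b hb
      simp only [Finset.mem_insert, Finset.mem_singleton] at hb
      rcases hb with rfl | rfl
      · exact Finset.mem_filter.mpr ⟨haF, hcontra⟩
      · exact Finset.mem_filter.mpr ⟨heF, hl.symm⟩
    have h3 := Finset.card_le_card h2
    rw [Finset.card_pair hane] at h3
    have h4 := (hd (D.ends e).1).2
    omega

private lemma kcF_erase_loop {D : MDigraph} {e : ℕ} (he : e ∈ D.A)
    (hl : (D.ends e).1 = (D.ends e).2) {F : Finset ℕ} (heF : e ∈ F) (hF : F ⊆ D.A)
    (hF' : ∀ a ∈ F.erase e, (D.ends a).1 ≠ (D.ends e).1 ∧ (D.ends a).2 ≠ (D.ends e).1) :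
    kcF D F = kcF ⟨D.V.erase (D.ends e).1,
      D.A.filter (fun a => (D.ends a).1 ≠ (D.ends e).1 ∧ (D.ends a).2 ≠ (D.ends e).1),
      D.ends⟩ (F.erase e) + 1 := by
  set D₂ : MDigraph := ⟨D.V.erase (D.ends e).1,
      D.A.filter (fun a => (D.ends a).1 ≠ (D.ends e).1 ∧ (D.ends a).2 ≠ (D.ends e).1),
      D.ends⟩ with hD₂def
  have hsub : F.erase e ⊆ D₂.A := fun a ha =>
    Finset.mem_filter.mpr ⟨hF (Finset.mem_of_mem_erase ha), hF' a ha⟩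
  have hset : F.powerset.filter (fun C => ∃ k, IsCycle D C k) =
      insert {e} ((F.erase e).powerset.filter (fun C => ∃ k, IsCycle D₂ C k)) := by
    ext C
    simp only [Finset.mem_filter, Finset.mem_powerset, Finset.mem_insert]
    constructor
    · rintro ⟨hCF, k, hcyc⟩
      by_cases heC : e ∈ C
      · exact Or.inl (cycle_loop_eq hcyc heC hl)
      · refine Or.inr ⟨Finset.subset_erase.mpr ⟨hCF, heC⟩, k,
          isCycle_of_subset (D₁ := D) (D₂ := D₂) rfl
            ((Finset.subset_erase.mpr ⟨hCF, heC⟩).trans hsub) hcyc⟩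
    · rintro (rfl | ⟨hCF, k, hcyc⟩)
      · exact ⟨Finset.singleton_subset_iff.mpr heF, 1, singleton_loop_cycle he hl⟩
      · refine ⟨hCF.trans (Finset.erase_subset _ _), k,
          isCycle_of_subset (D₁ := D₂) (D₂ := D) rfl
            (hCF.trans ((Finset.erase_subset _ _).trans hF)) hcyc⟩
  have hnot : ({e} : Finset ℕ) ∉ (F.erase e).powerset.filter (fun C => ∃ k, IsCycle D₂ C k) := by
    intro hmem
    have := Finset.mem_powerset.mp (Finset.mem_filter.mp hmem).1
    exact Finset.notMem_erase e F (this (Finset.mem_singleton_self e))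
  unfold kcF
  rw [hset, Finset.card_insert_of_notMem hnot]

end MDigraph

/-- for a loop `e` of `D`,
`σ̂(D;x,y) = σ̂(D_{-e};x,y) + x·y·σ̂(D_{/e};x,y)`. -/
theorem biCycPoly_loop (D : MDigraph) (hwf : D.WellFormed)
    (e : ℕ) (he : e ∈ D.A) (hloop : D.IsLoop e) :
    D.biCycPoly = (D.delArc e).biCycPoly +
      MvPolynomial.X 0 * MvPolynomial.X 1 * (D.contractArc e).biCycPoly := by
  classical
  have hl : (D.ends e).1 = (D.ends e).2 := hloop
  set D₂ : MDigraph := ⟨D.V.erase (D.ends e).1,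
      D.A.filter (fun a => (D.ends a).1 ≠ (D.ends e).1 ∧ (D.ends a).2 ≠ (D.ends e).1),
      D.ends⟩ with hD₂def
  have hcontract : D.contractArc e = D₂ := by
    simp only [MDigraph.contractArc]
    rw [if_pos hl, hD₂def]
  rw [hcontract]
  have hsum : D.biCycPoly =
      (∑ F ∈ (D.A.powerset.filter (fun F => MDigraph.DegOK D F ∧ MDigraph.kpF D F = 0)).filter
          (fun F => e ∉ F),
        (MvPolynomial.X 0 ^ F.card * MvPolynomial.X 1 ^ MDigraph.kcF D F : MvPolynomial (Fin 2) ℝ)) +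
      ∑ F ∈ (D.A.powerset.filter (fun F => MDigraph.DegOK D F ∧ MDigraph.kpF D F = 0)).filter
          (fun F => e ∈ F),
        MvPolynomial.X 0 ^ F.card * MvPolynomial.X 1 ^ MDigraph.kcF D F := by
    simp only [MDigraph.biCycPoly]
    rw [← Finset.sum_filter_add_sum_filter_not
      (D.A.powerset.filter (fun F => MDigraph.DegOK D F ∧ MDigraph.kpF D F = 0))
      (fun F => e ∉ F)]
    congr 1
    apply Finset.sum_congr _ (fun _ _ => rfl)
    ext F
    simp [not_not]
  have hA : (∑ F ∈ (D.A.powerset.filter (fun F => MDigraph.DegOK D F ∧ MDigraph.kpF D F = 0)).filter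
          (fun F => e ∉ F),
        (MvPolynomial.X 0 ^ F.card * MvPolynomial.X 1 ^ MDigraph.kcF D F : MvPolynomial (Fin 2) ℝ))
      = (D.delArc e).biCycPoly := by
    simp only [MDigraph.biCycPoly]
    apply Finset.sum_congr
    · ext F
      simp only [Finset.mem_filter, Finset.mem_powerset]
      constructor
      · rintro ⟨⟨hFA, hcond⟩, hne⟩
        exact ⟨Finset.subset_erase.mpr ⟨hFA, hne⟩, hcond⟩
      · rintro ⟨hFA, hcond⟩
        obtain ⟨h1, h2⟩ := Finset.subset_erase.mp (hFA : F ⊆ D.A.erase e)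
        exact ⟨⟨h1, hcond⟩, h2⟩
    · intro F hF
      simp only [Finset.mem_filter, Finset.mem_powerset] at hF
      have hFsub : F ⊆ D.A.erase e := hF.1
      have hkc : MDigraph.kcF D F = MDigraph.kcF (D.delArc e) F := by
        unfold MDigraph.kcF
        congr 1
        apply Finset.filter_congr
        intro C hC
        rw [Finset.mem_powerset] at hC
        constructor
        · rintro ⟨k, hcyc⟩
          exact ⟨k, MDigraph.isCycle_of_subset (D₁ := D) (D₂ := D.delArc e) rfl
            (hC.trans hFsub) hcyc⟩
        · rintro ⟨k, hcyc⟩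
          exact ⟨k, MDigraph.isCycle_of_subset (D₁ := D.delArc e) (D₂ := D) rfl
            (hC.trans (hFsub.trans (Finset.erase_subset _ _))) hcyc⟩
      rw [hkc]
  have hB : (∑ F ∈ (D.A.powerset.filter (fun F => MDigraph.DegOK D F ∧ MDigraph.kpF D F = 0)).filter
          (fun F => e ∈ F),
        (MvPolynomial.X 0 ^ F.card * MvPolynomial.X 1 ^ MDigraph.kcF D F : MvPolynomial (Fin 2) ℝ))
      = MvPolynomial.X 0 * MvPolynomial.X 1 * D₂.biCycPoly := by
    simp only [MDigraph.biCycPoly]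
    rw [Finset.mul_sum]
    apply Finset.sum_nbij' (fun F => F.erase e) (fun F => insert e F)
    · -- maps into target
      intro F hF
      simp only [Finset.mem_filter, Finset.mem_powerset] at hF
      obtain ⟨⟨hFA, hdeg, hkp⟩, heF⟩ := hF
      have havoid := MDigraph.loop_degOK_avoid hl heF hdeg
      have hsub : F.erase e ⊆ D₂.A := fun a ha =>
        Finset.mem_filter.mpr ⟨hFA (Finset.mem_of_mem_erase ha), havoid a ha⟩
      have hdeg' : MDigraph.DegOK D₂ (F.erase e) :=
        MDigraph.degOK_mono (Finset.erase_subset _ _) hdeg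
      have h0 : MDigraph.kpF D (F.erase e) = 0 := by
        rw [MDigraph.kpF, Finset.card_eq_zero, Finset.filter_eq_empty_iff] at hkp ⊢
        intro w hw
        obtain ⟨b, hb, hbw⟩ := Finset.mem_image.mp hw
        have hwu : w ≠ (D.ends e).1 := fun h => (havoid b hb).1 (hbw.trans h)
        have hfeq : (F.erase e).filter (fun a => (D.ends a).2 = w) =
            F.filter (fun a => (D.ends a).2 = w) := by
          rw [Finset.filter_erase, Finset.erase_eq_of_notMem]
          intro hmem
          exact hwu (hl.trans (Finset.mem_filter.mp hmem).2).symm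
        rw [hfeq]
        exact hkp (Finset.mem_image.mpr ⟨b, Finset.mem_of_mem_erase hb, hbw⟩)
      exact Finset.mem_filter.mpr ⟨Finset.mem_powerset.mpr hsub, hdeg', h0⟩
    · -- maps back
      intro F' hF'
      simp only [Finset.mem_filter, Finset.mem_powerset] at hF'
      obtain ⟨hF'A, hdeg', hkp'⟩ := hF'
      have havoid : ∀ a ∈ F', (D.ends a).1 ≠ (D.ends e).1 ∧ (D.ends a).2 ≠ (D.ends e).1 :=
        fun a ha => (Finset.mem_filter.mp (hF'A ha)).2
      have heF' : e ∉ F' := fun h => (havoid e h).1 rfl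
      have hfe : ∀ w, (insert e F').filter (fun a => (D.ends a).1 = w) =
          if w = (D.ends e).1 then {e} else F'.filter (fun a => (D.ends a).1 = w) := by
        intro w
        rw [Finset.filter_insert]
        split_ifs with h1 h2 h2
        · rw [Finset.filter_eq_empty_iff.mpr (fun a ha hc => (havoid a ha).1 (hc.trans h2))]
          rfl
        · exact absurd h1.symm h2
        · exact absurd h2.symm h1
        · rfl
      have hfh : ∀ w, (insert e F').filter (fun a => (D.ends a).2 = w) =
          if w = (D.ends e).1 then {e} else F'.filter (fun a => (D.ends a).2 = w) := by
        intro w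
        rw [Finset.filter_insert]
        split_ifs with h1 h2 h2
        · rw [Finset.filter_eq_empty_iff.mpr (fun a ha hc => (havoid a ha).2 (hc.trans h2))]
          rfl
        · exact absurd (hl.trans h1).symm h2
        · exact absurd (hl.symm.trans h2.symm) h1
        · rfl
      have hdeg : MDigraph.DegOK D (insert e F') := by
        intro w
        rw [hfe w, hfh w]
        split_ifs with h
        · simp
        · exact hdeg' w
      have hkp : MDigraph.kpF D (insert e F') = 0 := by
        rw [MDigraph.kpF, Finset.card_eq_zero, Finset.filter_eq_empty_iff]
        intro w hw
        rw [Finset.image_insert, Finset.mem_insert] at hw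
        rw [hfh w]
        rcases hw with rfl | hw
        · rw [if_pos rfl]
          simp
        · obtain ⟨b, hb, hbw⟩ := Finset.mem_image.mp hw
          have hwu : w ≠ (D.ends e).1 := fun h => (havoid b hb).1 (hbw.trans h)
          rw [if_neg hwu]
          rw [MDigraph.kpF, Finset.card_eq_zero, Finset.filter_eq_empty_iff] at hkp'
          exact hkp' hw
      exact Finset.mem_filter.mpr ⟨Finset.mem_filter.mpr ⟨Finset.mem_powerset.mpr
        (Finset.insert_subset he (fun a ha => Finset.filter_subset _ _ (hF'A ha))),
        hdeg, hkp⟩, Finset.mem_insert_self e F'⟩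
    · -- left inverse
      intro F hF
      simp only [Finset.mem_filter] at hF
      exact Finset.insert_erase hF.2
    · -- right inverse
      intro F' hF'
      simp only [Finset.mem_filter, Finset.mem_powerset] at hF'
      have heF' : e ∉ F' := fun h => (Finset.mem_filter.mp (hF'.1 h)).2.1 rfl
      exact Finset.erase_insert heF'
    · -- summand equality
      intro F hF
      simp only [Finset.mem_filter, Finset.mem_powerset] at hF
      obtain ⟨⟨hFA, hdeg, hkp⟩, heF⟩ := hF
      have havoid := MDigraph.loop_degOK_avoid hl heF hdeg
      have hkc := MDigraph.kcF_erase_loop he hl heF hFA havoid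
      rw [← hD₂def] at hkc
      have hcard : F.card = (F.erase e).card + 1 := (Finset.card_erase_add_one heF).symm
      rw [hkc, hcard]
      ring
  rw [hsum, hA, hB]
end

section
/- Let D=(V,E) be a finite multidigraph and let e=(u,v) be a non-loop arc of D. Then σ̂(D;x,y) = σ̂(D_{-e};x,y) + x·σ̂(D_{/e};x,y) − x·σ̂(D_{†e};x,y). -/
open Classical

namespace MDigraph

-- helper lemmas to test
lemma mod_add_gen (x c n : ℕ) : (x % n + c) % n = (x + c) % n := (Nat.mod_modEq x n).add_right c

lemma mod_inj {k i j c : ℕ} (hi : i < k) (hj : j < k) (h : (i + c) % k = (j + c) % k) : i = j := by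
  have h2 : i % k = j % k := Nat.ModEq.add_right_cancel' c h
  rwa [Nat.mod_eq_of_lt hi, Nat.mod_eq_of_lt hj] at h2

lemma kpF_eq_zero_iff (D : MDigraph) (F : Finset ℕ) :
    kpF D F = 0 ↔ ∀ a ∈ F, ∃ b ∈ F, (D.ends b).2 = (D.ends a).1 := by
  simp only [kpF, Finset.card_eq_zero, Finset.filter_eq_empty_iff, Finset.mem_image]
  push_neg
  constructor
  · rintro h a ha
    obtain ⟨b, hb1, hb2⟩ := h (⟨a, ha, rfl⟩ : ∃ b ∈ F, (D.ends b).1 = (D.ends a).1)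
    exact ⟨b, hb1, hb2⟩
  · rintro h w ⟨a, ha, rfl⟩
    exact h a ha

lemma degok_tail_unique {D : MDigraph} {F : Finset ℕ} (h : DegOK D F) {a b : ℕ}
    (ha : a ∈ F) (hb : b ∈ F) (hab : (D.ends a).1 = (D.ends b).1) : a = b :=
  Finset.card_le_one.mp (h (D.ends b).1).1 a (Finset.mem_filter.mpr ⟨ha, hab⟩) b
    (Finset.mem_filter.mpr ⟨hb, rfl⟩)

lemma degok_head_unique {D : MDigraph} {F : Finset ℕ} (h : DegOK D F) {a b : ℕ}
    (ha : a ∈ F) (hb : b ∈ F) (hab : (D.ends a).2 = (D.ends b).2) : a = b :=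
  Finset.card_le_one.mp (h (D.ends b).2).2 a (Finset.mem_filter.mpr ⟨ha, hab⟩) b
    (Finset.mem_filter.mpr ⟨hb, rfl⟩)

lemma isCycle_congr {D₁ D₂ : MDigraph} {C : Finset ℕ} {k : ℕ}
    (hA : ∀ a ∈ C, a ∈ D₂.A) (hE : ∀ a ∈ C, D₂.ends a = D₁.ends a)
    (h : IsCycle D₁ C k) : IsCycle D₂ C k := by
  obtain ⟨hk, vf, af, hv, ha, he, him⟩ := h
  refine ⟨hk, vf, af, hv, ha, fun i hi => ?_, him⟩
  have hmem : af i ∈ C := him ▸ Finset.mem_image_of_mem af (Finset.mem_range.mpr hi)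
  exact ⟨hA _ hmem, (hE _ hmem).trans (he i hi).2⟩

lemma kcF_congr {D₁ D₂ : MDigraph} {F : Finset ℕ}
    (h1 : F ⊆ D₁.A) (h2 : F ⊆ D₂.A) (hE : ∀ a ∈ F, D₂.ends a = D₁.ends a) :
    kcF D₁ F = kcF D₂ F := by
  unfold kcF
  congr 1
  apply Finset.filter_congr
  intro C hC
  rw [Finset.mem_powerset] at hC
  constructor
  · rintro ⟨k, hk⟩
    exact ⟨k, isCycle_congr (fun a ha => h2 (hC ha)) (fun a ha => hE a (hC ha)) hk⟩
  · rintro ⟨k, hk⟩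
    exact ⟨k, isCycle_congr (fun a ha => h1 (hC ha)) (fun a ha => (hE a (hC ha)).symm) hk⟩

lemma degok_congr {D₁ D₂ : MDigraph} {F : Finset ℕ}
    (hE : ∀ a ∈ F, D₂.ends a = D₁.ends a) : DegOK D₁ F ↔ DegOK D₂ F := by
  unfold DegOK
  apply forall_congr'
  intro w
  rw [Finset.filter_congr (fun a ha => by rw [hE a ha] : ∀ a ∈ F, ((D₁.ends a).1 = w ↔ (D₂.ends a).1 = w)),
      Finset.filter_congr (fun a ha => by rw [hE a ha] : ∀ a ∈ F, ((D₁.ends a).2 = w ↔ (D₂.ends a).2 = w))]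

lemma kpF_congr {D₁ D₂ : MDigraph} {F : Finset ℕ}
    (hE : ∀ a ∈ F, D₂.ends a = D₁.ends a) : kpF D₁ F = kpF D₂ F := by
  unfold kpF
  rw [Finset.image_congr (fun a ha => by show (D₁.ends a).1 = (D₂.ends a).1; rw [hE a ha] : Set.EqOn (fun a => (D₁.ends a).1) (fun a => (D₂.ends a).1) ↑F)]
  congr 1
  apply Finset.filter_congr
  intro w _
  rw [Finset.filter_congr (fun a ha => by rw [hE a ha] : ∀ a ∈ F, ((D₁.ends a).2 = w ↔ (D₂.ends a).2 = w))]

lemma cycle_arcs_mem {D : MDigraph} {C : Finset ℕ} {k : ℕ} (h : IsCycle D C k) :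
    ∀ a ∈ C, a ∈ D.A := by
  obtain ⟨hk, vf, af, hv, ha, he, him⟩ := h
  intro a haC
  rw [him, Finset.mem_image] at haC
  obtain ⟨i, hi, rfl⟩ := haC
  exact (he i (Finset.mem_range.mp hi)).1

lemma rot_witness {D : MDigraph} {k : ℕ} (hk : 0 < k) (c : ℕ) {vf af : ℕ → ℕ}
    (hv : ∀ i j, i < k → j < k → vf i = vf j → i = j)
    (ha : ∀ i j, i < k → j < k → af i = af j → i = j)
    (he : ∀ i, i < k → af i ∈ D.A ∧ D.ends (af i) = (vf i, vf ((i + 1) % k))) :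
    (∀ i j, i < k → j < k → vf ((i + c) % k) = vf ((j + c) % k) → i = j) ∧
    (∀ i j, i < k → j < k → af ((i + c) % k) = af ((j + c) % k) → i = j) ∧
    (∀ i, i < k → af ((i + c) % k) ∈ D.A ∧
      D.ends (af ((i + c) % k)) = (vf ((i + c) % k), vf (((i + 1) % k + c) % k))) ∧
    (Finset.range k).image (fun j => af ((j + c) % k)) = (Finset.range k).image af := by
  have hmlt : ∀ i : ℕ, (i + c) % k < k := fun i => Nat.mod_lt _ hk
  refine ⟨fun i j hi hj h => mod_inj hi hj (hv _ _ (hmlt i) (hmlt j) h),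
    fun i j hi hj h => mod_inj hi hj (ha _ _ (hmlt i) (hmlt j) h), fun i hi => ?_, ?_⟩
  · refine ⟨(he _ (hmlt i)).1, ?_⟩
    rw [(he _ (hmlt i)).2]
    congr 1
    rw [mod_add_gen, mod_add_gen (i+1) c k]
    congr 2
    omega
  · apply Finset.eq_of_subset_of_card_le
    · intro x hx
      rw [Finset.mem_image] at hx ⊢
      obtain ⟨j, hj, rfl⟩ := hx
      exact ⟨(j + c) % k, Finset.mem_range.mpr (hmlt j), rfl⟩
    · have c1 : ((Finset.range k).image af).card = k :=
        (Finset.card_image_of_injOn (fun i hi j hj h =>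
          ha i j (by simpa using hi) (by simpa using hj) h)).trans (Finset.card_range k)
      have c2 : ((Finset.range k).image (fun j => af ((j + c) % k))).card = k :=
        (Finset.card_image_of_injOn (fun i hi j hj h =>
          mod_inj (by simpa using hi) (by simpa using hj)
            (ha _ _ (hmlt i) (hmlt j) h))).trans (Finset.card_range k)
      rw [c1, c2]

lemma cycle_avoid {D : MDigraph} {F C : Finset ℕ} {e u v k : ℕ}
    (hend : D.ends e = (u, v)) (hdeg : DegOK D F) (heF : e ∈ F) (hCF : C ⊆ F)
    (heC : e ∉ C) (hcyc : IsCycle D C k) :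
    ∀ a ∈ C, (D.ends a).1 ≠ u ∧ (D.ends a).1 ≠ v ∧ (D.ends a).2 ≠ u ∧ (D.ends a).2 ≠ v := by
  have key1 : ∀ a ∈ C, (D.ends a).1 ≠ u := by
    intro a haC h1
    have : a = e := degok_tail_unique hdeg (hCF haC) heF (by rw [h1, hend])
    exact heC (this ▸ haC)
  have key2 : ∀ a ∈ C, (D.ends a).2 ≠ v := by
    intro a haC h2
    have : a = e := degok_head_unique hdeg (hCF haC) heF (by rw [h2, hend])
    exact heC (this ▸ haC)
  obtain ⟨hk, vf, af, hv, ha, he, him⟩ := hcyc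
  intro a haC
  refine ⟨key1 a haC, ?_, ?_, key2 a haC⟩
  · -- (D.ends a).1 ≠ v
    intro h1
    obtain ⟨i, hi, rfl⟩ : ∃ i, i < k ∧ af i = a := by
      rw [him, Finset.mem_image] at haC
      obtain ⟨i, hi, rfl⟩ := haC
      exact ⟨i, Finset.mem_range.mp hi, rfl⟩
    have hvi : vf i = v := by rw [(he i hi).2] at h1; exact h1
    set j := (i + (k - 1)) % k with hj
    have hjk : j < k := Nat.mod_lt _ hk
    have hmem : af j ∈ C := him ▸ Finset.mem_image_of_mem af (Finset.mem_range.mpr hjk)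
    apply key2 (af j) hmem
    rw [(he j hjk).2]
    show vf ((j + 1) % k) = v
    have : (j + 1) % k = i := by
      rw [hj, mod_add_gen]
      have h2 : i + (k - 1) + 1 = i + k := by omega
      rw [h2, Nat.add_mod_right, Nat.mod_eq_of_lt hi]
    rw [this, hvi]
  · -- (D.ends a).2 ≠ u
    intro h2
    obtain ⟨i, hi, rfl⟩ : ∃ i, i < k ∧ af i = a := by
      rw [him, Finset.mem_image] at haC
      obtain ⟨i, hi, rfl⟩ := haC
      exact ⟨i, Finset.mem_range.mp hi, rfl⟩
    have hvu : vf ((i + 1) % k) = u := by rw [(he i hi).2] at h2; exact h2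
    set j := (i + 1) % k with hj
    have hjk : j < k := Nat.mod_lt _ hk
    have hmem : af j ∈ C := him ▸ Finset.mem_image_of_mem af (Finset.mem_range.mpr hjk)
    apply key1 (af j) hmem
    rw [(he j hjk).2]
    exact hvu

lemma cycle_no_head_u {D' : MDigraph} {C : Finset ℕ} {u k : ℕ}
    (hcyc : IsCycle D' C k) (hnt : ∀ a ∈ C, (D'.ends a).1 ≠ u) :
    ∀ a ∈ C, (D'.ends a).2 ≠ u := by
  obtain ⟨hk, vf, af, hv, ha, he, him⟩ := hcyc
  intro a haC h2
  obtain ⟨i, hi, rfl⟩ : ∃ i, i < k ∧ af i = a := by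
    rw [him, Finset.mem_image] at haC
    obtain ⟨i, hi, rfl⟩ := haC
    exact ⟨i, Finset.mem_range.mp hi, rfl⟩
  have hvu : vf ((i + 1) % k) = u := by rw [(he i hi).2] at h2; exact h2
  have hjk : (i + 1) % k < k := Nat.mod_lt _ hk
  have hmem : af ((i + 1) % k) ∈ C :=
    him ▸ Finset.mem_image_of_mem af (Finset.mem_range.mpr hjk)
  apply hnt _ hmem
  rw [(he _ hjk).2]
  exact hvu

lemma cycle_contract_mem {D D' : MDigraph} {C : Finset ℕ} {e u v k : ℕ}
    (hCA : D'.A = D.A.filter fun a => (D.ends a).1 ≠ u ∧ (D.ends a).2 ≠ v)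
    (hCE : ∀ a, D'.ends a = (if (D.ends a).1 = v then u else (D.ends a).1,
      if (D.ends a).2 = v then u else (D.ends a).2))
    (hend : D.ends e = (u, v)) (huv : u ≠ v)
    (hcyc : IsCycle D C k) (heC : e ∈ C) :
    IsCycle D' (C.erase e) (k - 1) ∧ ∃ a ∈ C.erase e, (D'.ends a).1 = u := by
  obtain ⟨hk, vf, af, hv0, ha0, he0, him0⟩ := hcyc
  obtain ⟨i₀, hi₀, hafi₀⟩ : ∃ i₀, i₀ < k ∧ af i₀ = e := by
    rw [him0, Finset.mem_image] at heC
    obtain ⟨i, hi, h⟩ := heC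
    exact ⟨i, Finset.mem_range.mp hi, h⟩
  obtain ⟨hv, ha, he, him⟩ := rot_witness (Nat.lt_of_lt_of_le Nat.zero_lt_one hk) (i₀ + 1) hv0 ha0 he0
  set V : ℕ → ℕ := fun j => vf ((j + (i₀ + 1)) % k) with hV
  set A : ℕ → ℕ := fun j => af ((j + (i₀ + 1)) % k) with hA
  have hAk1 : A (k - 1) = e := by
    show af ((k - 1 + (i₀ + 1)) % k) = e
    have h1 : k - 1 + (i₀ + 1) = i₀ + k := by omega
    rw [h1, Nat.add_mod_right, Nat.mod_eq_of_lt hi₀, hafi₀]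
  have hk1 : k - 1 < k := by omega
  have hek : D.ends (A (k - 1)) = (V (k - 1), V 0) := by
    have := (he (k - 1) hk1).2
    rwa [show (k - 1 + 1) % k = 0 by rw [Nat.sub_add_cancel hk, Nat.mod_self]] at this
  have hVk1 : V (k - 1) = u := by
    rw [hAk1, hend] at hek
    exact (Prod.mk.injEq _ _ _ _ ▸ hek.symm).1
  have hV0 : V 0 = v := by
    rw [hAk1, hend] at hek
    exact (Prod.mk.injEq _ _ _ _ ▸ hek.symm).2
  have hk2 : 2 ≤ k := by
    by_contra h
    have hk1' : k = 1 := by omega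
    apply huv
    rw [← hVk1, ← hV0, hk1']
  have hVnev : ∀ j, 0 < j → j < k → V j ≠ v := by
    intro j hj0 hjk h
    have := hv j 0 hjk (by omega) (show V j = V 0 by rw [h, hV0])
    omega
  have hVneu : ∀ j, j < k - 1 → V j ≠ u := by
    intro j hjk h
    have := hv j (k - 1) (by omega) hk1 (show V j = V (k - 1) by rw [h, hVk1])
    omega
  set k' := k - 1 with hk'
  set W : ℕ → ℕ := fun j => if j = 0 then u else V j with hW
  have hends' : ∀ j, j < k' → A j ∈ D'.A ∧ D'.ends (A j) = (W j, W ((j + 1) % k')) := by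
    intro j hjk'
    have hjk : j < k := by omega
    have hDj := (he j hjk).2
    have hj1 : (j + 1) % k = j + 1 := Nat.mod_eq_of_lt (by omega)
    rw [hj1] at hDj
    have ht : (D.ends (A j)).1 = V j := by rw [hDj]
    have hh : (D.ends (A j)).2 = V (j + 1) := by rw [hDj]
    have hVj1nev : V (j + 1) ≠ v := hVnev (j + 1) (by omega) (by omega)
    have hmem : A j ∈ D'.A := by
      rw [hCA, Finset.mem_filter]
      refine ⟨(he j hjk).1, ?_, ?_⟩
      · rw [ht]; exact hVneu j hjk'
      · rw [hh]; exact hVj1nev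
    refine ⟨hmem, ?_⟩
    rw [hCE, ht, hh]
    have hfst : (if V j = v then u else V j) = W j := by
      by_cases hj0 : j = 0
      · subst hj0; rw [hV0]; simp [hW]
      · rw [if_neg (hVnev j (Nat.pos_of_ne_zero hj0) (by omega)), hW]
        simp [hj0]
    have hsnd : (if V (j + 1) = v then u else V (j + 1)) = W ((j + 1) % k') := by
      rw [if_neg hVj1nev]
      by_cases hjl : j + 1 < k'
      · rw [Nat.mod_eq_of_lt hjl, hW]; simp [Nat.succ_ne_zero]
      · have hje : j + 1 = k' := by omega
        rw [hje, Nat.mod_self]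
        simpa [hW] using hVk1
    rw [hfst, hsnd]
  have heim : e ∉ (Finset.range k').image A := by
    rw [Finset.mem_image]
    rintro ⟨j, hj, hje⟩
    have hjk' := Finset.mem_range.mp hj
    have := ha j (k - 1) (by omega) hk1
      (show A j = A (k - 1) by rw [hje, hAk1])
    omega
  have hCrw : C.erase e = (Finset.range k').image A := by
    have hrange : Finset.range k = insert k' (Finset.range k') := by
      rw [hk', ← Finset.range_add_one]
      congr 1
      omega
    have : C = insert e ((Finset.range k').image A) := by
      rw [him0, ← him, hrange, Finset.image_insert, hAk1]
    rw [this, Finset.erase_insert heim]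
  constructor
  · refine ⟨by omega, W, A, ?_, ?_, hends', hCrw⟩
    · intro i j hi hj h
      rw [hW] at h
      by_cases hi0 : i = 0 <;> by_cases hj0 : j = 0
      · omega
      · simp only [if_pos hi0, if_neg hj0] at h
        exact absurd h.symm (hVneu j (by omega))
      · simp only [if_neg hi0, if_pos hj0] at h
        exact absurd h (hVneu i (by omega))
      · simp only [if_neg hi0, if_neg hj0] at h
        exact hv i j (by omega) (by omega) h
    · intro i j hi hj h
      exact ha i j (by omega) (by omega) h
  · refine ⟨A 0, ?_, ?_⟩
    · rw [hCrw]
      exact Finset.mem_image_of_mem A (Finset.mem_range.mpr (by omega))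
    · have := (hends' 0 (by omega)).2
      rw [this]
      simp [hW]

lemma cycle_expand {D D' : MDigraph} {C' : Finset ℕ} {e u v k' : ℕ}
    (hCA : D'.A = D.A.filter fun a => (D.ends a).1 ≠ u ∧ (D.ends a).2 ≠ v)
    (hCE : ∀ a, D'.ends a = (if (D.ends a).1 = v then u else (D.ends a).1,
      if (D.ends a).2 = v then u else (D.ends a).2))
    (hend : D.ends e = (u, v)) (huv : u ≠ v) (heA : e ∈ D.A)
    (hsub : C' ⊆ D'.A) (hcyc : IsCycle D' C' k')
    (hPu : ∃ a ∈ C', (D'.ends a).1 = u) :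
    e ∉ C' ∧ IsCycle D (insert e C') (k' + 1) := by
  have heD' : e ∉ D'.A := by
    rw [hCA, Finset.mem_filter]
    rintro ⟨-, h1, -⟩
    exact h1 (by rw [hend])
  have heC' : e ∉ C' := fun h => heD' (hsub h)
  refine ⟨heC', ?_⟩
  obtain ⟨hk, vf, af, hv0, ha0, he0, him0⟩ := hcyc
  obtain ⟨a₀, ha₀C, ha₀u⟩ := hPu
  obtain ⟨i₀, hi₀, hafi₀⟩ : ∃ i₀, i₀ < k' ∧ af i₀ = a₀ := by
    rw [him0, Finset.mem_image] at ha₀C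
    obtain ⟨i, hi, h⟩ := ha₀C
    exact ⟨i, Finset.mem_range.mp hi, h⟩
  obtain ⟨hv, ha, he, him⟩ :=
    rot_witness (D := D') (Nat.lt_of_lt_of_le Nat.zero_lt_one hk) i₀ hv0 ha0 he0
  set V : ℕ → ℕ := fun j => vf ((j + i₀) % k') with hV
  set A : ℕ → ℕ := fun j => af ((j + i₀) % k') with hA
  have hV0 : V 0 = u := by
    show vf ((0 + i₀) % k') = u
    rw [Nat.zero_add, Nat.mod_eq_of_lt hi₀]
    have h1 := (he0 i₀ hi₀).2
    rw [hafi₀] at h1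
    rw [← ha₀u, h1]
  have hVinj : ∀ i j, i < k' → j < k' → V i = V j → i = j := hv
  have hVne_u : ∀ j, 0 < j → j < k' → V j ≠ u := by
    intro j hj0 hjk h
    have := hVinj j 0 hjk (by omega) (by rw [h, hV0])
    omega
  -- key per-arc facts
  have hfacts : ∀ j, j < k' → A j ∈ D.A ∧ (D.ends (A j)).1 ≠ u ∧ (D.ends (A j)).2 ≠ v ∧
      (D.ends (A j)).1 = (if j = 0 then v else V j) ∧
      (D.ends (A j)).2 = V ((j + 1) % k') ∧ V j ≠ v := by
    intro j hjk
    have hAD' : A j ∈ D'.A := (he j hjk).1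
    have hADA : A j ∈ D.A ∧ (D.ends (A j)).1 ≠ u ∧ (D.ends (A j)).2 ≠ v := by
      rw [hCA, Finset.mem_filter] at hAD'
      exact ⟨hAD'.1, hAD'.2⟩
    have hDE := (he j hjk).2
    rw [hCE] at hDE
    have eq1 : (if (D.ends (A j)).1 = v then u else (D.ends (A j)).1) = V j :=
      congrArg Prod.fst hDE
    have eq2 : (if (D.ends (A j)).2 = v then u else (D.ends (A j)).2) = V ((j + 1) % k') :=
      congrArg Prod.snd hDE
    rw [if_neg hADA.2.2] at eq2
    have hVjnev : V j ≠ v := by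
      intro h
      by_cases hc : (D.ends (A j)).1 = v
      · rw [if_pos hc] at eq1; exact huv (eq1.trans h)
      · rw [if_neg hc] at eq1; exact hc (eq1.trans h)
    refine ⟨hADA.1, hADA.2.1, hADA.2.2, ?_, eq2, hVjnev⟩
    by_cases hj0 : j = 0
    · subst hj0
      rw [if_pos rfl]
      by_contra hc
      rw [if_neg hc] at eq1
      exact hADA.2.1 (eq1.trans hV0)
    · rw [if_neg hj0]
      by_cases hc : (D.ends (A j)).1 = v
      · rw [if_pos hc] at eq1
        exact absurd eq1.symm (hVne_u j (Nat.pos_of_ne_zero hj0) hjk)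
      · rwa [if_neg hc] at eq1
  set W : ℕ → ℕ := fun j => if j = 0 then v else if j = k' then u else V j with hW
  set B : ℕ → ℕ := fun j => if j = k' then e else A j with hB
  have hVnev : ∀ j, j < k' → V j ≠ v := fun j hj => (hfacts j hj).2.2.2.2.2
  refine ⟨by omega, W, B, ?_, ?_, ?_, ?_⟩
  · -- vertex injectivity
    intro i j hi hj h
    rw [hW] at h
    simp only at h
    by_cases hi0 : i = 0 <;> by_cases hj0 : j = 0
    · omega
    · rw [if_pos hi0, if_neg hj0] at h
      by_cases hjk : j = k'
      · rw [if_pos hjk] at h; exact absurd h (Ne.symm huv)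
      · rw [if_neg hjk] at h; exact absurd h.symm (hVnev j (by omega))
    · rw [if_neg hi0, if_pos hj0] at h
      by_cases hik : i = k'
      · rw [if_pos hik] at h; exact absurd h.symm (Ne.symm huv)
      · rw [if_neg hik] at h; exact absurd h (hVnev i (by omega))
    · rw [if_neg hi0, if_neg hj0] at h
      by_cases hik : i = k' <;> by_cases hjk : j = k'
      · omega
      · rw [if_pos hik, if_neg hjk] at h
        exact absurd h.symm (hVne_u j (by omega) (by omega))
      · rw [if_neg hik, if_pos hjk] at h
        exact absurd h (hVne_u i (by omega) (by omega))
      · rw [if_neg hik, if_neg hjk] at h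
        exact hVinj i j (by omega) (by omega) h
  · -- arc injectivity
    intro i j hi hj h
    rw [hB] at h
    simp only at h
    by_cases hik : i = k' <;> by_cases hjk : j = k'
    · omega
    · rw [if_pos hik, if_neg hjk] at h
      exact absurd (show e ∈ D'.A by rw [h]; exact (he j (by omega)).1) heD' 
    · rw [if_neg hik, if_pos hjk] at h
      exact absurd (show e ∈ D'.A by rw [← h]; exact (he i (by omega)).1) heD' 
    · rw [if_neg hik, if_neg hjk] at h
      exact ha i j (by omega) (by omega) h
  · -- ends
    intro j hj
    by_cases hjk : j = k'
    · subst hjk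
      have hBj : B j = e := if_pos rfl
      refine ⟨hBj ▸ heA, ?_⟩
      rw [hBj, hend]
      have h1 : (j + 1) % (j + 1) = 0 := Nat.mod_self _
      rw [h1]
      have hW0 : W 0 = v := by simp [hW]
      have hWk : W j = u := by simp [hW, (show j ≠ 0 by omega)]
      rw [hWk, hW0]
    · have hjk' : j < k' := by omega
      have hBj : B j = A j := if_neg hjk
      obtain ⟨hAD, -, -, ht, hh, -⟩ := hfacts j hjk'
      refine ⟨hBj ▸ hAD, ?_⟩
      rw [hBj]
      have hmod : (j + 1) % (k' + 1) = j + 1 := Nat.mod_eq_of_lt (by omega)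
      rw [hmod]
      have hWj : W j = (if j = 0 then v else V j) := by
        by_cases hj0 : j = 0
        · simp [hW, hj0]
        · simp [hW, hj0, hjk]
      have hWj1 : W (j + 1) = V ((j + 1) % k') := by
        by_cases hj1 : j + 1 = k'
        · rw [hj1, Nat.mod_self]
          simp [hW, hV0, (show k' ≠ 0 by omega)]
        · rw [Nat.mod_eq_of_lt (by omega)]
          simp [hW, hj1]
      rw [hWj1, hWj]
      ext <;> simp [ht, hh]
  · -- image
    have hrange : Finset.range (k' + 1) = insert k' (Finset.range k') := Finset.range_add_one
    rw [hrange, Finset.image_insert]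
    have hBk : B k' = e := if_pos rfl
    rw [hBk]
    congr 1
    have hBA : ∀ j ∈ Finset.range k', B j = A j := by
      intro j hj
      exact if_neg (by have := Finset.mem_range.mp hj; omega)
    calc C' = (Finset.range k').image af := him0
    _ = (Finset.range k').image A := him.symm
    _ = (Finset.range k').image B := Finset.image_congr (fun j hj => (hBA j (by simpa using hj)).symm)

lemma isCycle_to_contract {D D' : MDigraph} {C : Finset ℕ} {k u v : ℕ}
    (hCA : D'.A = D.A.filter fun a => (D.ends a).1 ≠ u ∧ (D.ends a).2 ≠ v)
    (hCE : ∀ a, D'.ends a = (if (D.ends a).1 = v then u else (D.ends a).1,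
      if (D.ends a).2 = v then u else (D.ends a).2))
    (hav : ∀ a ∈ C, (D.ends a).1 ≠ u ∧ (D.ends a).1 ≠ v ∧ (D.ends a).2 ≠ u ∧ (D.ends a).2 ≠ v)
    (hcyc : IsCycle D C k) : IsCycle D' C k := by
  apply isCycle_congr (D₁ := D)
  · intro a haC
    rw [hCA, Finset.mem_filter]
    exact ⟨cycle_arcs_mem hcyc a haC, (hav a haC).1, (hav a haC).2.2.2⟩
  · intro a haC
    rw [hCE, if_neg (hav a haC).2.1, if_neg (hav a haC).2.2.2]
  · exact hcyc

lemma isCycle_from_contract {D D' : MDigraph} {C : Finset ℕ} {k u v : ℕ}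
    (hCA : D'.A = D.A.filter fun a => (D.ends a).1 ≠ u ∧ (D.ends a).2 ≠ v)
    (hCE : ∀ a, D'.ends a = (if (D.ends a).1 = v then u else (D.ends a).1,
      if (D.ends a).2 = v then u else (D.ends a).2))
    (hsub : C ⊆ D'.A) (hnt : ∀ a ∈ C, (D'.ends a).1 ≠ u)
    (hcyc : IsCycle D' C k) : IsCycle D C k := by
  apply isCycle_congr (D₁ := D')
  · intro a haC
    have := hsub haC
    rw [hCA, Finset.mem_filter] at this
    exact this.1
  · intro a haC
    have hmem := hsub haC
    rw [hCA, Finset.mem_filter] at hmem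
    have h1 : (D.ends a).1 ≠ v := by
      intro h
      apply hnt a haC
      rw [hCE, if_pos h]
    rw [hCE, if_neg h1, if_neg hmem.2.2]
  · exact hcyc

lemma contract_tail_ne_u {D D' : MDigraph} {a u v : ℕ}
    (hCE : ∀ b, D'.ends b = (if (D.ends b).1 = v then u else (D.ends b).1,
      if (D.ends b).2 = v then u else (D.ends b).2))
    (h1 : (D.ends a).1 ≠ u) (h2 : (D.ends a).1 ≠ v) : (D'.ends a).1 ≠ u := by
  rw [hCE, if_neg h2]
  exact h1

lemma kcF_contract {D D' : MDigraph} {F : Finset ℕ} {e u v : ℕ}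
    (hCA : D'.A = D.A.filter fun a => (D.ends a).1 ≠ u ∧ (D.ends a).2 ≠ v)
    (hCE : ∀ a, D'.ends a = (if (D.ends a).1 = v then u else (D.ends a).1,
      if (D.ends a).2 = v then u else (D.ends a).2))
    (hend : D.ends e = (u, v)) (huv : u ≠ v) (heA : e ∈ D.A)
    (heF : e ∈ F) (hFA : F ⊆ D.A) (hdeg : DegOK D F) (hsub' : F.erase e ⊆ D'.A) :
    kcF D F = kcF D' (F.erase e) := by
  unfold kcF
  refine Finset.card_bij' (fun C _ => C.erase e)
    (fun C' _ => if ∃ a ∈ C', (D'.ends a).1 = u then insert e C' else C') ?hi ?hj ?left ?right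
  case hi =>
    intro C hC
    beta_reduce
    rw [Finset.mem_filter, Finset.mem_powerset] at hC ⊢
    obtain ⟨hCF, k, hcyc⟩ := hC
    by_cases heC : e ∈ C
    · obtain ⟨hcyc', -⟩ := cycle_contract_mem hCA hCE hend huv hcyc heC
      exact ⟨Finset.erase_subset_erase e hCF, k - 1, hcyc'⟩
    · rw [Finset.erase_eq_of_notMem heC]
      have hav := cycle_avoid hend hdeg heF hCF heC hcyc
      refine ⟨fun a haC => Finset.mem_erase.mpr ⟨fun h => heC (h ▸ haC), hCF haC⟩,
        k, isCycle_to_contract hCA hCE hav hcyc⟩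
  case hj =>
    intro C' hC'
    beta_reduce
    rw [Finset.mem_filter, Finset.mem_powerset] at hC' ⊢
    obtain ⟨hCF', k, hcyc⟩ := hC'
    have hCD' : C' ⊆ D'.A := hCF'.trans hsub'
    by_cases hPu : ∃ a ∈ C', (D'.ends a).1 = u
    · rw [if_pos hPu]
      obtain ⟨heC', hcyc'⟩ := cycle_expand hCA hCE hend huv heA hCD' hcyc hPu
      refine ⟨?_, k + 1, hcyc'⟩
      intro a ha
      rcases Finset.mem_insert.mp ha with rfl | ha
      · exact heF
      · exact (Finset.erase_subset e F) (hCF' ha)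
    · rw [if_neg hPu]
      push_neg at hPu
      exact ⟨hCF'.trans (Finset.erase_subset e F), k,
        isCycle_from_contract hCA hCE hCD' hPu hcyc⟩
  case left =>
    intro C hC
    beta_reduce
    rw [Finset.mem_filter, Finset.mem_powerset] at hC
    obtain ⟨hCF, k, hcyc⟩ := hC
    by_cases heC : e ∈ C
    · obtain ⟨-, hex⟩ := cycle_contract_mem hCA hCE hend huv hcyc heC
      rw [if_pos hex, Finset.insert_erase heC]
    · rw [Finset.erase_eq_of_notMem heC]
      have hav := cycle_avoid hend hdeg heF hCF heC hcyc
      rw [if_neg ?_]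
      push_neg
      intro a haC
      exact contract_tail_ne_u hCE (hav a haC).1 (hav a haC).2.1
  case right =>
    intro C' hC'
    beta_reduce
    rw [Finset.mem_filter, Finset.mem_powerset] at hC'
    have heC' : e ∉ C' := fun h => (Finset.mem_erase.mp (hC'.1 h)).1 rfl
    by_cases hPu : ∃ a ∈ C', (D'.ends a).1 = u
    · rw [if_pos hPu, Finset.erase_insert heC']
    · rw [if_neg hPu, Finset.erase_eq_of_notMem heC']

section
variable {D D' : MDigraph} {F : Finset ℕ} {e u v : ℕ}

lemma erase_subset_contract
    (hCA : D'.A = D.A.filter fun a => (D.ends a).1 ≠ u ∧ (D.ends a).2 ≠ v)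
    (hend : D.ends e = (u, v))
    (heF : e ∈ F) (hFA : F ⊆ D.A) (hdeg : DegOK D F) :
    F.erase e ⊆ D'.A := by
  intro a ha
  obtain ⟨hane, haF⟩ := Finset.mem_erase.mp ha
  rw [hCA, Finset.mem_filter]
  refine ⟨hFA haF, fun h1 => ?_, fun h2 => ?_⟩
  · exact hane (degok_tail_unique hdeg haF heF (by rw [h1, hend]))
  · exact hane (degok_head_unique hdeg haF heF (by rw [h2, hend]))

lemma degok_contract_forward
    (hCA : D'.A = D.A.filter fun a => (D.ends a).1 ≠ u ∧ (D.ends a).2 ≠ v)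
    (hCE : ∀ a, D'.ends a = (if (D.ends a).1 = v then u else (D.ends a).1,
      if (D.ends a).2 = v then u else (D.ends a).2))
    (hend : D.ends e = (u, v)) (huv : u ≠ v)
    (heF : e ∈ F) (hFA : F ⊆ D.A) (hdeg : DegOK D F) :
    DegOK D' (F.erase e) := by
  have hsub := erase_subset_contract hCA hend heF hFA hdeg
  have hprops : ∀ a ∈ F.erase e, (D.ends a).1 ≠ u ∧ (D.ends a).2 ≠ v := by
    intro a ha
    have := hsub ha
    rw [hCA, Finset.mem_filter] at this
    exact this.2
  intro w
  constructor
  · by_cases hw : w = v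
    · have hempty : (F.erase e).filter (fun a => (D'.ends a).1 = w) = ∅ := by
        rw [Finset.filter_eq_empty_iff]
        intro a ha h
        rw [hw, hCE] at h
        simp only at h
        by_cases hc : (D.ends a).1 = v
        · rw [if_pos hc] at h; exact huv h
        · rw [if_neg hc] at h; exact hc h
      rw [hempty]
      simp
    · calc ((F.erase e).filter (fun a => (D'.ends a).1 = w)).card
          ≤ (F.filter (fun a => (D.ends a).1 = (if w = u then v else w))).card := by
            apply Finset.card_le_card
            intro a ha
            rw [Finset.mem_filter] at ha ⊢
            obtain ⟨haF, hw'⟩ := ha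
            refine ⟨(Finset.erase_subset e F) haF, ?_⟩
            rw [hCE] at hw'
            simp only at hw'
            by_cases hc : (D.ends a).1 = v
            · rw [if_pos hc] at hw'
              rw [if_pos hw'.symm]
              exact hc
            · rw [if_neg hc] at hw'
              rw [if_neg (by rw [← hw']; exact (hprops a haF).1)]
              exact hw'
      _ ≤ 1 := (hdeg _).1
  · calc ((F.erase e).filter (fun a => (D'.ends a).2 = w)).card
        ≤ (F.filter (fun a => (D.ends a).2 = w)).card := by
          apply Finset.card_le_card
          intro a ha
          rw [Finset.mem_filter] at ha ⊢
          obtain ⟨haF, hw'⟩ := ha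
          rw [hCE, if_neg (hprops a haF).2] at hw'
          exact ⟨(Finset.erase_subset e F) haF, hw'⟩
    _ ≤ 1 := (hdeg _).2

lemma kp_contract_forward
    (hCA : D'.A = D.A.filter fun a => (D.ends a).1 ≠ u ∧ (D.ends a).2 ≠ v)
    (hCE : ∀ a, D'.ends a = (if (D.ends a).1 = v then u else (D.ends a).1,
      if (D.ends a).2 = v then u else (D.ends a).2))
    (hend : D.ends e = (u, v)) (huv : u ≠ v)
    (heF : e ∈ F) (hFA : F ⊆ D.A) (hdeg : DegOK D F) (hkp : kpF D F = 0) :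
    kpF D' (F.erase e) = 0 := by
  have hsub := erase_subset_contract hCA hend heF hFA hdeg
  have hprops : ∀ a ∈ F.erase e, (D.ends a).1 ≠ u ∧ (D.ends a).2 ≠ v := by
    intro a ha
    have := hsub ha
    rw [hCA, Finset.mem_filter] at this
    exact this.2
  have hkp' := (kpF_eq_zero_iff D F).mp hkp
  rw [kpF_eq_zero_iff]
  intro a ha
  have haF : a ∈ F := (Finset.erase_subset e F) ha
  by_cases hc : (D.ends a).1 = v
  · obtain ⟨b, hbF, hbu⟩ := hkp' e heF
    have hbu' : (D.ends b).2 = u := by rw [hbu, hend]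
    have hbne : b ≠ e := by
      intro h
      rw [h, hend] at hbu'
      exact huv hbu'.symm
    refine ⟨b, Finset.mem_erase.mpr ⟨hbne, hbF⟩, ?_⟩
    rw [hCE a, hCE b]
    simp only
    rw [if_pos hc, if_neg (by rw [hbu']; exact huv), hbu']
  · obtain ⟨b, hbF, hbw⟩ := hkp' a haF
    have hbne : b ≠ e := by
      intro h
      rw [h, hend] at hbw
      exact hc hbw.symm
    refine ⟨b, Finset.mem_erase.mpr ⟨hbne, hbF⟩, ?_⟩
    rw [hCE a, hCE b]
    simp only
    rw [if_neg hc, if_neg (by rw [hbw]; exact hc), hbw]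

lemma pu_contract_forward
    (hCE : ∀ a, D'.ends a = (if (D.ends a).1 = v then u else (D.ends a).1,
      if (D.ends a).2 = v then u else (D.ends a).2))
    (hend : D.ends e = (u, v)) (huv : u ≠ v)
    (heF : e ∈ F) (hkp : kpF D F = 0) :
    ∃ a ∈ F.erase e, (D'.ends a).1 = u ∨ (D'.ends a).2 = u := by
  obtain ⟨b, hbF, hbu⟩ := (kpF_eq_zero_iff D F).mp hkp e heF
  have hbu' : (D.ends b).2 = u := by rw [hbu, hend]
  have hbne : b ≠ e := by
    intro h
    rw [h, hend] at hbu'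
    exact huv hbu'.symm
  refine ⟨b, Finset.mem_erase.mpr ⟨hbne, hbF⟩, Or.inr ?_⟩
  rw [hCE b]
  simp only
  rw [if_neg (by rw [hbu']; exact huv), hbu']

lemma insert_subset_of_contract {F' : Finset ℕ}
    (hCA : D'.A = D.A.filter fun a => (D.ends a).1 ≠ u ∧ (D.ends a).2 ≠ v)
    (hend : D.ends e = (u, v))
    (heA : e ∈ D.A) (hsub : F' ⊆ D'.A) :
    insert e F' ⊆ D.A ∧ e ∉ F' := by
  have hprops : ∀ a ∈ F', a ∈ D.A ∧ (D.ends a).1 ≠ u ∧ (D.ends a).2 ≠ v := by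
    intro a ha
    have := hsub ha
    rw [hCA, Finset.mem_filter] at this
    exact ⟨this.1, this.2⟩
  constructor
  · intro a ha
    rcases Finset.mem_insert.mp ha with rfl | ha
    · exact heA
    · exact (hprops a ha).1
  · intro h
    have := hsub h
    rw [hCA, Finset.mem_filter] at this
    exact this.2.1 (by rw [hend])

lemma degok_contract_backward {F' : Finset ℕ}
    (hCA : D'.A = D.A.filter fun a => (D.ends a).1 ≠ u ∧ (D.ends a).2 ≠ v)
    (hCE : ∀ a, D'.ends a = (if (D.ends a).1 = v then u else (D.ends a).1,
      if (D.ends a).2 = v then u else (D.ends a).2))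
    (hend : D.ends e = (u, v)) (huv : u ≠ v)
    (hsub : F' ⊆ D'.A) (hdeg' : DegOK D' F') :
    DegOK D (insert e F') := by
  have hprops : ∀ a ∈ F', (D.ends a).1 ≠ u ∧ (D.ends a).2 ≠ v := by
    intro a ha
    have := hsub ha
    rw [hCA, Finset.mem_filter] at this
    exact this.2
  intro w
  constructor
  · rw [Finset.filter_insert]
    by_cases hw : w = u
    · rw [if_pos (by rw [hend, hw])]
      have hempty : F'.filter (fun a => (D.ends a).1 = w) = ∅ := by
        rw [Finset.filter_eq_empty_iff]
        intro a ha hx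
        exact (hprops a ha).1 (hx.trans hw)
      rw [hempty]
      simp
    · rw [if_neg (by rw [hend]; exact fun hh => hw hh.symm)]
      by_cases hwv : w = v
      · calc (F'.filter (fun a => (D.ends a).1 = w)).card
            ≤ (F'.filter (fun a => (D'.ends a).1 = u)).card := by
              apply Finset.card_le_card
              intro a ha
              rw [Finset.mem_filter] at ha ⊢
              refine ⟨ha.1, ?_⟩
              rw [hCE, if_pos (ha.2.trans hwv)]
          _ ≤ 1 := (hdeg' u).1
      · calc (F'.filter (fun a => (D.ends a).1 = w)).card
            ≤ (F'.filter (fun a => (D'.ends a).1 = w)).card := by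
              apply Finset.card_le_card
              intro a ha
              rw [Finset.mem_filter] at ha ⊢
              refine ⟨ha.1, ?_⟩
              rw [hCE, if_neg (by rw [ha.2]; exact hwv)]
              exact ha.2
          _ ≤ 1 := (hdeg' w).1
  · rw [Finset.filter_insert]
    by_cases hw : w = v
    · rw [if_pos (by rw [hend, hw])]
      have hempty : F'.filter (fun a => (D.ends a).2 = w) = ∅ := by
        rw [Finset.filter_eq_empty_iff]
        intro a ha hx
        exact (hprops a ha).2 (hx.trans hw)
      rw [hempty]
      simp
    · rw [if_neg (by rw [hend]; exact fun hh => hw hh.symm)]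
      calc (F'.filter (fun a => (D.ends a).2 = w)).card
          ≤ (F'.filter (fun a => (D'.ends a).2 = w)).card := by
            apply Finset.card_le_card
            intro a ha
            rw [Finset.mem_filter] at ha ⊢
            refine ⟨ha.1, ?_⟩
            rw [hCE, if_neg (hprops a ha.1).2]
            exact ha.2
        _ ≤ 1 := (hdeg' w).2

lemma kp_contract_backward {F' : Finset ℕ}
    (hCA : D'.A = D.A.filter fun a => (D.ends a).1 ≠ u ∧ (D.ends a).2 ≠ v)
    (hCE : ∀ a, D'.ends a = (if (D.ends a).1 = v then u else (D.ends a).1,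
      if (D.ends a).2 = v then u else (D.ends a).2))
    (hend : D.ends e = (u, v)) (huv : u ≠ v)
    (hsub : F' ⊆ D'.A) (hkp' : kpF D' F' = 0)
    (hPu : ∃ a ∈ F', (D'.ends a).1 = u ∨ (D'.ends a).2 = u) :
    kpF D (insert e F') = 0 := by
  have hprops : ∀ a ∈ F', (D.ends a).1 ≠ u ∧ (D.ends a).2 ≠ v := by
    intro a ha
    have := hsub ha
    rw [hCA, Finset.mem_filter] at this
    exact this.2
  have hkp'' := (kpF_eq_zero_iff D' F').mp hkp'
  rw [kpF_eq_zero_iff]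
  intro a ha
  -- find b in F' with (D'.ends b).2 = u, whenever u is covered
  have hhead_u : (∃ c ∈ F', (D'.ends c).1 = u ∨ (D'.ends c).2 = u) →
      ∃ b ∈ F', (D.ends b).2 = u := by
    rintro ⟨c, hc, hcu | hcu⟩
    · obtain ⟨b, hb, hbu⟩ := hkp'' c hc
      rw [hcu] at hbu
      refine ⟨b, hb, ?_⟩
      rw [hCE] at hbu
      simp only at hbu
      rwa [if_neg (hprops b hb).2] at hbu
    · refine ⟨c, hc, ?_⟩
      rw [hCE] at hcu
      simp only at hcu
      rwa [if_neg (hprops c hc).2] at hcu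
  rcases Finset.mem_insert.mp ha with rfl | haF'
  · -- a = e, tail u
    obtain ⟨b, hb, hbu⟩ := hhead_u hPu
    refine ⟨b, Finset.mem_insert_of_mem hb, ?_⟩
    rw [hbu, hend]
  · by_cases hc : (D.ends a).1 = v
    · exact ⟨e, Finset.mem_insert_self e _, by rw [hend, hc]⟩
    · have htail : (D'.ends a).1 = (D.ends a).1 := by
        rw [hCE, if_neg hc]
      obtain ⟨b, hb, hbu⟩ := hkp'' a haF'
      rw [htail] at hbu
      refine ⟨b, Finset.mem_insert_of_mem hb, ?_⟩
      rw [hCE] at hbu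
      simp only at hbu
      rwa [if_neg (hprops b hb).2] at hbu

end


end MDigraph

/-- STATEMENT 13 proof -/
theorem biCycPoly_nonloop (D : MDigraph) (hwf : D.WellFormed)
    (e : ℕ) (he : e ∈ D.A) (hnl : ¬ D.IsLoop e) :
    D.biCycPoly = (D.delArc e).biCycPoly +
      MvPolynomial.X 0 * (D.contractArc e).biCycPoly -
      MvPolynomial.X 0 * (D.extractArc e).biCycPoly := by
  classical
  have huv : (D.ends e).1 ≠ (D.ends e).2 := hnl
  have hend : D.ends e = ((D.ends e).1, (D.ends e).2) := rfl
  have hCA : (D.contractArc e).A =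
      D.A.filter (fun a => (D.ends a).1 ≠ (D.ends e).1 ∧ (D.ends a).2 ≠ (D.ends e).2) := by
    simp only [MDigraph.contractArc]
    rw [if_neg huv]
  have hCE : ∀ a, (D.contractArc e).ends a =
      (if (D.ends a).1 = (D.ends e).2 then (D.ends e).1 else (D.ends a).1,
       if (D.ends a).2 = (D.ends e).2 then (D.ends e).1 else (D.ends a).2) := by
    intro a
    simp only [MDigraph.contractArc]
    rw [if_neg huv]
  have hXA : (D.extractArc e).A = D.A.filter (fun a =>
      (D.ends a).1 ≠ (D.ends e).1 ∧ (D.ends a).1 ≠ (D.ends e).2 ∧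
      (D.ends a).2 ≠ (D.ends e).1 ∧ (D.ends a).2 ≠ (D.ends e).2) := rfl
  have hXE : ∀ a, (D.extractArc e).ends a = D.ends a := fun _ => rfl
  have hCE1 : ∀ a, ((D.contractArc e).ends a).1 =
      if (D.ends a).1 = (D.ends e).2 then (D.ends e).1 else (D.ends a).1 := by
    intro a; rw [hCE]
  have hCE2 : ∀ a, ((D.contractArc e).ends a).2 =
      if (D.ends a).2 = (D.ends e).2 then (D.ends e).1 else (D.ends a).2 := by
    intro a; rw [hCE]
  -- step 1 : split the sum for D by `e ∈ F`
  have hsplitD : D.biCycPoly =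
      (∑ F ∈ (D.A.powerset.filter (fun F => MDigraph.DegOK D F ∧ MDigraph.kpF D F = 0)).filter
          (fun F => e ∈ F),
        MvPolynomial.X 0 ^ F.card * MvPolynomial.X 1 ^ MDigraph.kcF D F) +
      (∑ F ∈ (D.A.powerset.filter (fun F => MDigraph.DegOK D F ∧ MDigraph.kpF D F = 0)).filter
          (fun F => ¬ e ∈ F),
        MvPolynomial.X 0 ^ F.card * MvPolynomial.X 1 ^ MDigraph.kcF D F) := by
    rw [MDigraph.biCycPoly]
    exact (Finset.sum_filter_add_sum_filter_not _ _ _).symm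
  -- step 2 : split the sum for the contraction by whether the merged vertex is covered
  have hsplitC : (D.contractArc e).biCycPoly =
      (∑ F ∈ ((D.contractArc e).A.powerset.filter
          (fun F => MDigraph.DegOK (D.contractArc e) F ∧ MDigraph.kpF (D.contractArc e) F = 0)).filter
          (fun F => ∃ a ∈ F, ((D.contractArc e).ends a).1 = (D.ends e).1 ∨
            ((D.contractArc e).ends a).2 = (D.ends e).1),
        MvPolynomial.X 0 ^ F.card * MvPolynomial.X 1 ^ MDigraph.kcF (D.contractArc e) F) +
      (∑ F ∈ ((D.contractArc e).A.powerset.filter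
          (fun F => MDigraph.DegOK (D.contractArc e) F ∧ MDigraph.kpF (D.contractArc e) F = 0)).filter
          (fun F => ¬ ∃ a ∈ F, ((D.contractArc e).ends a).1 = (D.ends e).1 ∨
            ((D.contractArc e).ends a).2 = (D.ends e).1),
        MvPolynomial.X 0 ^ F.card * MvPolynomial.X 1 ^ MDigraph.kcF (D.contractArc e) F) := by
    rw [MDigraph.biCycPoly]
    exact (Finset.sum_filter_add_sum_filter_not _ _ _).symm
  -- step 3 : the `e ∉ F` part equals the deletion polynomial
  have hdel : (∑ F ∈ (D.A.powerset.filter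
        (fun F => MDigraph.DegOK D F ∧ MDigraph.kpF D F = 0)).filter (fun F => ¬ e ∈ F),
        MvPolynomial.X 0 ^ F.card * MvPolynomial.X 1 ^ MDigraph.kcF D F) =
      (D.delArc e).biCycPoly := by
    rw [MDigraph.biCycPoly]
    apply Finset.sum_congr
    · ext F
      simp only [Finset.mem_filter, Finset.mem_powerset]
      constructor
      · rintro ⟨⟨hFA, hdeg, hkp⟩, heF⟩
        exact ⟨Finset.subset_erase.mpr ⟨hFA, heF⟩, hdeg, hkp⟩
      · rintro ⟨hFA, hdeg, hkp⟩
        have h2 : F ⊆ D.A.erase e := hFA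
        rw [Finset.subset_erase] at h2
        exact ⟨⟨h2.1, hdeg, hkp⟩, h2.2⟩
    · intro F hF
      simp only [Finset.mem_filter, Finset.mem_powerset] at hF
      have h2 : F ⊆ D.A.erase e := hF.1
      rw [Finset.subset_erase] at h2
      rw [MDigraph.kcF_congr (D₁ := D) (D₂ := D.delArc e) h2.1 hF.1 (fun a _ => rfl)]
  -- step 4 : the uncovered part of the contraction equals the extraction polynomial
  have hX : (∑ F ∈ ((D.contractArc e).A.powerset.filter
        (fun F => MDigraph.DegOK (D.contractArc e) F ∧ MDigraph.kpF (D.contractArc e) F = 0)).filter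
        (fun F => ¬ ∃ a ∈ F, ((D.contractArc e).ends a).1 = (D.ends e).1 ∨
          ((D.contractArc e).ends a).2 = (D.ends e).1),
        MvPolynomial.X 0 ^ F.card * MvPolynomial.X 1 ^ MDigraph.kcF (D.contractArc e) F) =
      (D.extractArc e).biCycPoly := by
    -- pointwise facts
    have hXtoC : ∀ F : Finset ℕ, F ⊆ (D.extractArc e).A →
        F ⊆ (D.contractArc e).A ∧ (∀ a ∈ F, (D.extractArc e).ends a = (D.contractArc e).ends a) ∧
        (∀ a ∈ F, ¬(((D.contractArc e).ends a).1 = (D.ends e).1 ∨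
          ((D.contractArc e).ends a).2 = (D.ends e).1)) := by
      intro F hF
      have hq : ∀ a ∈ F, a ∈ D.A ∧ (D.ends a).1 ≠ (D.ends e).1 ∧ (D.ends a).1 ≠ (D.ends e).2 ∧
          (D.ends a).2 ≠ (D.ends e).1 ∧ (D.ends a).2 ≠ (D.ends e).2 := by
        intro a ha
        have := hF ha
        rw [hXA, Finset.mem_filter] at this
        exact ⟨this.1, this.2⟩
      have hE : ∀ a ∈ F, (D.extractArc e).ends a = (D.contractArc e).ends a := by
        intro a ha
        rw [hXE, hCE, if_neg (hq a ha).2.2.1, if_neg (hq a ha).2.2.2.2]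
      refine ⟨?_, hE, ?_⟩
      · intro a ha
        rw [hCA, Finset.mem_filter]
        exact ⟨(hq a ha).1, (hq a ha).2.1, (hq a ha).2.2.2.2⟩
      · intro a ha h
        rw [← hE a ha, hXE] at h
        rcases h with h | h
        · exact (hq a ha).2.1 h
        · exact (hq a ha).2.2.2.1 h
    have hCtoX : ∀ F : Finset ℕ, F ⊆ (D.contractArc e).A →
        (∀ a ∈ F, ¬(((D.contractArc e).ends a).1 = (D.ends e).1 ∨
          ((D.contractArc e).ends a).2 = (D.ends e).1)) →
        F ⊆ (D.extractArc e).A ∧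
        (∀ a ∈ F, (D.extractArc e).ends a = (D.contractArc e).ends a) := by
      intro F hF hn
      have hq : ∀ a ∈ F, a ∈ D.A ∧ (D.ends a).1 ≠ (D.ends e).1 ∧ (D.ends a).2 ≠ (D.ends e).2 := by
        intro a ha
        have := hF ha
        rw [hCA, Finset.mem_filter] at this
        exact ⟨this.1, this.2⟩
      have htnv : ∀ a ∈ F, (D.ends a).1 ≠ (D.ends e).2 := by
        intro a ha hx
        exact hn a ha (Or.inl (by rw [hCE1, if_pos hx]))
      have hhnu : ∀ a ∈ F, (D.ends a).2 ≠ (D.ends e).1 := by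
        intro a ha hx
        exact hn a ha (Or.inr (by rw [hCE2, if_neg (hq a ha).2.2]; exact hx))
      have hE : ∀ a ∈ F, (D.extractArc e).ends a = (D.contractArc e).ends a := by
        intro a ha
        rw [hXE, hCE, if_neg (htnv a ha), if_neg (hq a ha).2.2]
      refine ⟨?_, hE⟩
      intro a ha
      rw [hXA, Finset.mem_filter]
      exact ⟨(hq a ha).1, (hq a ha).2.1, htnv a ha, hhnu a ha, (hq a ha).2.2⟩
    rw [MDigraph.biCycPoly]
    apply Finset.sum_congr
    · ext F
      simp only [Finset.mem_filter, Finset.mem_powerset]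
      constructor
      · rintro ⟨⟨hFC, hdeg, hkp⟩, hnPu⟩
        have hnp : ∀ a ∈ F, ¬(((D.contractArc e).ends a).1 = (D.ends e).1 ∨
            ((D.contractArc e).ends a).2 = (D.ends e).1) := by
          intro a ha h
          exact hnPu ⟨a, ha, h⟩
        obtain ⟨hFX, hE⟩ := hCtoX F hFC hnp
        refine ⟨hFX, ?_, ?_⟩
        · exact (MDigraph.degok_congr (fun a ha => hE a ha)).mp hdeg
        · rw [← MDigraph.kpF_congr (D₁ := D.contractArc e) (D₂ := D.extractArc e) (fun a ha => hE a ha)]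
          exact hkp
      · rintro ⟨hFX, hdeg, hkp⟩
        obtain ⟨hFC, hE, hnp⟩ := hXtoC F hFX
        refine ⟨⟨hFC, ?_, ?_⟩, ?_⟩
        · exact (MDigraph.degok_congr (fun a ha => (hE a ha).symm)).mp hdeg
        · rw [← MDigraph.kpF_congr (D₁ := D.extractArc e) (D₂ := D.contractArc e)
            (fun a ha => (hE a ha).symm)]
          exact hkp
        · rintro ⟨a, ha, h⟩
          exact hnp a ha h
    · intro F hF
      simp only [Finset.mem_filter, Finset.mem_powerset] at hF
      obtain ⟨hFC, hE, -⟩ := hXtoC F hF.1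
      rw [MDigraph.kcF_congr (D₁ := D.contractArc e) (D₂ := D.extractArc e) hFC hF.1
        (fun a ha => hE a ha)]
  -- step 5 : the `e ∈ F` part equals x times the covered part of the contraction
  have hmain : (∑ F ∈ (D.A.powerset.filter
        (fun F => MDigraph.DegOK D F ∧ MDigraph.kpF D F = 0)).filter (fun F => e ∈ F),
        MvPolynomial.X 0 ^ F.card * MvPolynomial.X 1 ^ MDigraph.kcF D F) =
      (MvPolynomial.X 0 : MvPolynomial (Fin 2) ℝ) *
      (∑ F ∈ ((D.contractArc e).A.powerset.filter
          (fun F => MDigraph.DegOK (D.contractArc e) F ∧ MDigraph.kpF (D.contractArc e) F = 0)).filter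
          (fun F => ∃ a ∈ F, ((D.contractArc e).ends a).1 = (D.ends e).1 ∨
            ((D.contractArc e).ends a).2 = (D.ends e).1),
        MvPolynomial.X 0 ^ F.card * MvPolynomial.X 1 ^ MDigraph.kcF (D.contractArc e) F) := by
    rw [Finset.mul_sum]
    refine Finset.sum_nbij' (fun F => F.erase e) (fun F' => insert e F') ?hi ?hj ?left ?right ?val
    case hi =>
      intro F hF
      simp only [Finset.mem_filter, Finset.mem_powerset] at hF ⊢
      obtain ⟨⟨hFA, hdeg, hkp⟩, heF⟩ := hF
      refine ⟨⟨MDigraph.erase_subset_contract hCA hend heF hFA hdeg,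
        MDigraph.degok_contract_forward hCA hCE hend huv heF hFA hdeg,
        MDigraph.kp_contract_forward hCA hCE hend huv heF hFA hdeg hkp⟩,
        MDigraph.pu_contract_forward hCE hend huv heF hkp⟩
    case hj =>
      intro F' hF'
      simp only [Finset.mem_filter, Finset.mem_powerset] at hF' ⊢
      obtain ⟨⟨hFA', hdeg', hkp'⟩, hPu⟩ := hF'
      obtain ⟨hsub, -⟩ := MDigraph.insert_subset_of_contract hCA hend he hFA'
      exact ⟨⟨hsub, MDigraph.degok_contract_backward hCA hCE hend huv hFA' hdeg',
        MDigraph.kp_contract_backward hCA hCE hend huv hFA' hkp' hPu⟩,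
        Finset.mem_insert_self e F'⟩
    case left =>
      intro F hF
      simp only [Finset.mem_filter, Finset.mem_powerset] at hF
      exact Finset.insert_erase hF.2
    case right =>
      intro F' hF'
      simp only [Finset.mem_filter, Finset.mem_powerset] at hF'
      obtain ⟨-, heF'⟩ := MDigraph.insert_subset_of_contract hCA hend he hF'.1.1
      exact Finset.erase_insert heF'
    case val =>
      intro F hF
      simp only [Finset.mem_filter, Finset.mem_powerset] at hF
      obtain ⟨⟨hFA, hdeg, hkp⟩, heF⟩ := hF
      have hkc : MDigraph.kcF D F = MDigraph.kcF (D.contractArc e) (F.erase e) :=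
        MDigraph.kcF_contract hCA hCE hend huv he heF hFA hdeg
          (MDigraph.erase_subset_contract hCA hend heF hFA hdeg)
      rw [hkc, Finset.card_erase_of_mem heF]
      obtain ⟨n, hn⟩ : ∃ n, F.card = n + 1 :=
        ⟨F.card - 1, by have := Finset.card_pos.mpr ⟨e, heF⟩; omega⟩
      rw [hn]
      simp only [Nat.add_sub_cancel]
      rw [pow_succ]
      ring
  rw [hsplitD, hsplitC, hmain, hdel, hX]
  ring
end
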